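/- Let λ ∈ Λ⁺(r) be a partition that is not a p-partition (i.e. some nonzero part λ_a is not a power of p), and write λ_a = s·p^k + R with 1 ≤ s < p, 0 ≤ R < p^k (and R > 0 if s = 1). Let ν be the composition obtained from λ by replacing the part λ_a with s parts equal to p^k followed by a part equal to R (if R > 0). Then ν precedes λ in the dominance-via-lexicographic order on associated partitions (ν < λ), the Young subgroup S_ν is contained in S_λ, and the index [S_λ : S_ν] = (s·p^k + R)!/((p^k!)^s · R!) is nonzero modulo p. -/

import Mathlib

/-- The label of the block of the composition `l` containing `k`:
`0` for `k = 0`, the (1-based) index of the consecutive `l`-block containing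
`k` for `1 ≤ k ≤ l.sum`, and `l.length + 1` for `k > l.sum`. -/
def blockOf (l : List ℕ) (k : ℕ) : ℕ :=
  if k = 0 then 0
  else ((Finset.range l.length).filter (fun i => (l.take (i + 1)).sum < k)).card + 1

/-- The Young subgroup of the composition `l`, as the set of permutations of `ℕ`
preserving every `l`-block (and fixing `0` and everything beyond `l.sum`). -/
def youngSet (l : List ℕ) : Set (Equiv.Perm ℕ) :=
  {σ | (∀ k, blockOf l (σ k) = blockOf l k) ∧ ∀ k, l.sum < k → σ k = k}

/-- `l₁ < l₂` in the order on compositions induced by the lexicographic order on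
the associated partitions: there is a largest part-size `K` at which the
multiplicities differ, and there `l₁` has fewer parts. -/
def compLt (l₁ l₂ : List ℕ) : Prop :=
  ∃ K, 0 < K ∧ l₁.count K < l₂.count K ∧ ∀ i, K < i → l₁.count i = l₂.count i

/-- The composition obtained from `l` by replacing the part at index `a` by
`s` parts equal to `pk` followed by a part `R` (if `R > 0`). -/
def nuList (l : List ℕ) (a s pk R : ℕ) : List ℕ :=
  l.take a ++ List.replicate s pk ++ (if R = 0 then [] else [R]) ++ l.drop (a + 1)

def cnt (l : List ℕ) (k : ℕ) : ℕ :=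
  ((Finset.range l.length).filter (fun i => (l.take (i + 1)).sum < k)).card

lemma pref_mono (l : List ℕ) {i j : ℕ} (h : i ≤ j) : (l.take i).sum ≤ (l.take j).sum := by
  have : l.take j = l.take i ++ (l.drop i).take (j - i) := by
    rw [← List.take_add]; congr 1; omega
  rw [this, List.sum_append]; omega

lemma cnt_filter_eq (l : List ℕ) (k : ℕ) :
    (Finset.range l.length).filter (fun i => (l.take (i + 1)).sum < k) =
      Finset.range (cnt l k) := by
  set S := (Finset.range l.length).filter (fun i => (l.take (i + 1)).sum < k) with hS
  have hdc : ∀ t ∈ S, ∀ u, u ≤ t → u ∈ S := by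
    intro t ht u hu
    simp only [hS, Finset.mem_filter, Finset.mem_range] at ht ⊢
    exact ⟨lt_of_le_of_lt hu ht.1, lt_of_le_of_lt (pref_mono l (by omega)) ht.2⟩
  ext t
  simp only [Finset.mem_range]
  constructor
  · intro ht
    have : Finset.range (t + 1) ⊆ S := by
      intro u hu; exact hdc t ht u (by simp at hu; omega)
    have := Finset.card_le_card this
    simp only [Finset.card_range] at this
    show t < S.card; omega
  · intro ht
    by_contra hns
    have : S ⊆ Finset.range t := by
      intro u hu
      simp only [Finset.mem_range]
      by_contra h
      exact hns (hdc u hu t (by omega))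
    have := Finset.card_le_card this
    simp only [Finset.card_range] at this
    change t < S.card at ht; omega

lemma cnt_le (l : List ℕ) (k : ℕ) : cnt l k ≤ l.length := by
  have := Finset.card_le_card (Finset.filter_subset
    (fun i => (l.take (i + 1)).sum < k) (Finset.range l.length))
  simpa [cnt] using this

lemma cnt_lt_of_lt (l : List ℕ) (k : ℕ) {t : ℕ} (h : t < cnt l k) :
    (l.take (t + 1)).sum < k := by
  have : t ∈ Finset.range (cnt l k) := Finset.mem_range.2 h
  rw [← cnt_filter_eq] at this
  exact (Finset.mem_filter.1 this).2

lemma cnt_ge (l : List ℕ) (k : ℕ) (h : cnt l k < l.length) :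
    k ≤ (l.take (cnt l k + 1)).sum := by
  by_contra hlt
  have : cnt l k ∈ Finset.range (cnt l k) := by
    rw [← cnt_filter_eq]
    exact Finset.mem_filter.2 ⟨Finset.mem_range.2 h, by omega⟩
  simp at this

lemma cnt_eq (l : List ℕ) (k c : ℕ) (h1 : c ≤ l.length)
    (h2 : ∀ t, t < c → (l.take (t + 1)).sum < k)
    (h3 : c < l.length → k ≤ (l.take (c + 1)).sum) : cnt l k = c := by
  have : (Finset.range l.length).filter (fun i => (l.take (i + 1)).sum < k) =
      Finset.range c := by
    ext t
    simp only [Finset.mem_filter, Finset.mem_range]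
    constructor
    · rintro ⟨ht, hs⟩
      by_contra h
      push_neg at h
      have hcl : c < l.length := by omega
      exact absurd (lt_of_le_of_lt (le_trans (h3 hcl) (pref_mono l (by omega))) hs) (lt_irrefl _)
    · intro ht
      exact ⟨by omega, h2 t ht⟩
  have := congrArg Finset.card this
  simpa [cnt] using this

lemma sum_take_append_ge (X Y : List ℕ) (m : ℕ) (h : X.length ≤ m) :
    ((X ++ Y).take m).sum = X.sum + (Y.take (m - X.length)).sum := by
  rw [List.take_append, List.sum_append, List.take_of_length_le h]

lemma l_decomp (l : List ℕ) (a : ℕ) (ha : a < l.length) :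
    l = l.take a ++ l.get ⟨a, ha⟩ :: l.drop (a + 1) := by
  conv_lhs => rw [← List.take_append_drop a l]
  congr 1
  exact List.drop_eq_getElem_cons ha

lemma nu_len (l : List ℕ) (a s pk R : ℕ) (ha : a < l.length) (hs : 1 ≤ s) :
    (nuList l a s pk R).length = l.length + (s + (if R = 0 then 0 else 1) - 1) := by
  have hT : (l.take a).length = a := List.length_take_of_le (le_of_lt ha)
  by_cases hR0 : R = 0 <;>
  · simp only [nuList, if_pos, if_neg, hR0, List.length_append, List.length_replicate, hT,
      List.length_drop, if_true, ite_true, ite_false, List.length_nil, List.length_cons,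
      if_false, List.length_singleton]
    omega

lemma nu_sum (l : List ℕ) (a s pk R : ℕ) (ha : a < l.length)
    (hv : l.get ⟨a, ha⟩ = s * pk + R) : (nuList l a s pk R).sum = l.sum := by
  have hesum : (if R = 0 then ([] : List ℕ) else [R]).sum = R := by
    split <;> simp_all
  conv_rhs => rw [l_decomp l a ha]
  simp only [nuList, List.sum_append, List.sum_cons, List.sum_replicate, smul_eq_mul,
    hv, hesum]
  ring

lemma pref_nu_low (l : List ℕ) (a s pk R : ℕ) (ha : a < l.length) {j : ℕ} (hj : j ≤ a) :
    ((nuList l a s pk R).take j).sum = (l.take j).sum := by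
  have hT : (l.take a).length = a := List.length_take_of_le (le_of_lt ha)
  simp only [nuList, List.append_assoc]
  rw [List.take_append_of_le_length (by rw [hT]; omega), List.take_take,
    min_eq_left hj]

lemma pref_nu_high (l : List ℕ) (a s pk R : ℕ) (ha : a < l.length) (hs : 1 ≤ s)
    (hv : l.get ⟨a, ha⟩ = s * pk + R) {t : ℕ} (hta : a ≤ t) :
    ((nuList l a s pk R).take (t + 1 + (s + (if R = 0 then 0 else 1) - 1))).sum
      = (l.take (t + 1)).sum := by
  have hT : (l.take a).length = a := List.length_take_of_le (le_of_lt ha)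
  have key : ∀ (E : List ℕ) (e : ℕ), E.length = e → E.sum = R → e ≤ 1 → 1 ≤ s + e - 1 + 1 →
      ((l.take a ++ (List.replicate s pk ++ (E ++ l.drop (a+1)))).take
        (t + 1 + (s + e - 1))).sum = (l.take (t + 1)).sum := by
    intro E e hE hEs he1 hse
    rw [sum_take_append_ge _ _ _ (by rw [hT]; omega), hT,
        sum_take_append_ge _ _ _ (by rw [List.length_replicate]; omega),
        List.length_replicate,
        sum_take_append_ge _ _ _ (by rw [hE]; omega), hE, hEs]
    conv_rhs => rw [l_decomp l a ha]
    rw [sum_take_append_ge _ _ _ (by rw [hT]; omega), hT]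
    have h1 : t + 1 - a = (t - a) + 1 := by omega
    rw [h1, List.take_succ_cons, List.sum_cons, List.sum_replicate, hv]
    have h2 : t + 1 + (s + e - 1) - a - s - e = t - a := by omega
    rw [h2]
    simp only [smul_eq_mul]
    ring
  by_cases hR0 : R = 0 <;>
  · simp only [nuList, hR0, if_true, if_false, ite_true, ite_false, List.append_assoc]
    first
    | exact key [] 0 rfl (by simp [hR0]) (by omega) (by omega)
    | exact key [R] 1 rfl (by simp) (by omega) (by omega)

lemma cnt_nu (l : List ℕ) (a s pk R : ℕ) (ha : a < l.length) (hs : 1 ≤ s)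
    (hv : l.get ⟨a, ha⟩ = s * pk + R) (k : ℕ) :
    cnt l k = if cnt (nuList l a s pk R) k ≤ a then cnt (nuList l a s pk R) k
      else max (cnt (nuList l a s pk R) k - (s + (if R = 0 then 0 else 1) - 1)) a := by
  set ν := nuList l a s pk R with hν
  set Δ := s + (if R = 0 then 0 else 1) - 1 with hΔ
  set c := cnt ν k with hc
  have hlen : ν.length = l.length + Δ := nu_len l a s pk R ha hs
  have hcle : c ≤ ν.length := cnt_le ν k
  split
  case isTrue h =>
    apply cnt_eq
    · omega
    · intro t ht
      rw [← pref_nu_low l a s pk R ha (show t + 1 ≤ a by omega)]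
      exact cnt_lt_of_lt ν k ht
    · intro hcl
      have hcν : c < ν.length := by omega
      have h1 : k ≤ (ν.take (c + 1)).sum := cnt_ge ν k hcν
      rcases lt_or_eq_of_le h with hlt | heq
      · rw [← pref_nu_low l a s pk R ha (show c + 1 ≤ a by omega)]
        exact h1
      · have h2 := pref_nu_high l a s pk R ha hs hv (le_refl a)
        rw [heq, ← h2]
        exact le_trans h1 (pref_mono ν (by omega))
  case isFalse h =>
    have hm3 := max_choice (c - Δ) a
    have hm1 : c - Δ ≤ max (c - Δ) a := le_max_left _ _
    have hm2 : a ≤ max (c - Δ) a := le_max_right _ _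
    apply cnt_eq
    · omega
    · intro t ht
      by_cases htA : t + 1 ≤ a
      · rw [← pref_nu_low l a s pk R ha htA]
        exact cnt_lt_of_lt ν k (by omega)
      · have h3 := pref_nu_high l a s pk R ha hs hv (show a ≤ t by omega)
        rw [← h3]
        have h4 := cnt_lt_of_lt ν k (show t + Δ < c by omega)
        have h5 : t + Δ + 1 = t + 1 + Δ := by omega
        rwa [h5] at h4
    · intro hml
      have h3 := pref_nu_high l a s pk R ha hs hv (show a ≤ max (c - Δ) a from hm2)
      rw [← h3]
      have hclt : c < ν.length := by omega
      exact le_trans (cnt_ge ν k hclt) (pref_mono ν (by omega))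

lemma blockOf_eq (l : List ℕ) (k : ℕ) (hk : k ≠ 0) : blockOf l k = cnt l k + 1 := by
  simp [blockOf, cnt, hk]

lemma blockOf_zero_iff (l : List ℕ) (k : ℕ) : blockOf l k = 0 ↔ k = 0 := by
  constructor
  · intro h
    by_contra hk
    rw [blockOf_eq l k hk] at h
    omega
  · intro h; simp [blockOf, h]

lemma young_subset (l : List ℕ) (a s pk R : ℕ) (ha : a < l.length) (hs : 1 ≤ s)
    (hv : l.get ⟨a, ha⟩ = s * pk + R) :
    youngSet (nuList l a s pk R) ⊆ youngSet l := by
  rintro σ ⟨h1, h2⟩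
  constructor
  · intro k
    by_cases hk : k = 0
    · have h0 := h1 0
      have : σ 0 = 0 := by
        rw [(blockOf_zero_iff _ 0).2 rfl] at h0
        exact (blockOf_zero_iff _ _).1 h0
      rw [hk, this]
    · have hσk : σ k ≠ 0 := by
        intro h0
        have := h1 k
        rw [h0, (blockOf_zero_iff _ 0).2 rfl] at this
        exact hk ((blockOf_zero_iff _ k).1 this.symm)
      have hcnt : cnt (nuList l a s pk R) (σ k) = cnt (nuList l a s pk R) k := by
        have := h1 k
        rw [blockOf_eq _ _ hσk, blockOf_eq _ _ hk] at this
        omega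
      rw [blockOf_eq _ _ hσk, blockOf_eq _ _ hk,
        cnt_nu l a s pk R ha hs hv, cnt_nu l a s pk R ha hs hv k, hcnt]
  · intro k hk
    exact h2 k (by rwa [nu_sum l a s pk R ha hv])

lemma part1 (l : List ℕ) (a s pk R : ℕ) (ha : a < l.length) (hs : 1 ≤ s)
    (hv : l.get ⟨a, ha⟩ = s * pk + R) (hpk : 0 < pk) (hR : R < pk) (hR1 : s = 1 → 0 < R) :
    compLt (nuList l a s pk R) l := by
  have hKpk : pk < s * pk + R := by
    rcases Nat.lt_or_ge s 2 with h2 | h2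
    · have hs1 : s = 1 := by omega
      have := hR1 hs1
      subst hs1
      rw [one_mul]
      omega
    · nlinarith
  refine ⟨s * pk + R, by positivity, ?_, ?_⟩
  · have hcl : l.count (s * pk + R) =
        (l.take a).count (s * pk + R) + 1 + (l.drop (a + 1)).count (s * pk + R) := by
      conv_lhs => rw [l_decomp l a ha]
      rw [List.count_append, hv, List.count_cons_self]
      ring
    have hcν : (nuList l a s pk R).count (s * pk + R) =
        (l.take a).count (s * pk + R) + (l.drop (a + 1)).count (s * pk + R) := by
      simp only [nuList, List.count_append]
      have h1 : (List.replicate s pk).count (s * pk + R) = 0 :=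
        List.count_eq_zero_of_not_mem (fun hmem => by
          rw [List.mem_replicate] at hmem; omega)
      have h2 : ((if R = 0 then [] else [R]) : List ℕ).count (s * pk + R) = 0 := by
        apply List.count_eq_zero_of_not_mem
        intro hmem
        split at hmem
        · simp at hmem
        · rw [List.mem_singleton] at hmem; omega
      omega
    omega
  · intro i hi
    have hcl : l.count i = (l.take a).count i + (l.drop (a + 1)).count i := by
      conv_lhs => rw [l_decomp l a ha]
      rw [List.count_append, hv, List.count_cons_of_ne (by omega)]
    have h1 : (List.replicate s pk).count i = 0 :=
      List.count_eq_zero_of_not_mem (fun hmem => by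
        rw [List.mem_replicate] at hmem; omega)
    have h2 : ((if R = 0 then [] else [R]) : List ℕ).count i = 0 := by
      apply List.count_eq_zero_of_not_mem
      intro hmem
      split at hmem
      · simp at hmem
      · rw [List.mem_singleton] at hmem; omega
    simp only [nuList, List.count_append, h1, h2, hcl]
    omega

lemma blockOf_le (l : List ℕ) (k : ℕ) : blockOf l k ≤ l.length + 1 := by
  by_cases hk : k = 0
  · simp [blockOf, hk]
  · rw [blockOf_eq l k hk]
    have := cnt_le l k
    omega

/-- block function on `Fin (l.sum + 1)`, valued in `Fin (l.length + 2)`. -/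

def fB (l : List ℕ) : Fin (l.sum + 1) → Fin (l.length + 2) :=
  fun i => ⟨blockOf l i.1, by have := blockOf_le l i.1; omega⟩

lemma fix_iff (l : List ℕ) (σ : Equiv.Perm ℕ) (h : ∀ k, l.sum < k → σ k = k) :
    ∀ x : ℕ, x < l.sum + 1 ↔ σ x < l.sum + 1 := by
  intro x
  constructor
  · intro hx
    by_contra hc
    have h1 : σ (σ x) = σ x := h (σ x) (by omega)
    have := σ.injective h1
    omega
  · intro hx
    by_contra hc
    have := h x (by omega)
    omega

def youngEquiv (l : List ℕ) :
    (youngSet l) ≃ {g : Equiv.Perm (Fin (l.sum + 1)) // fB l ∘ g = fB l} where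
  toFun σp := ⟨Equiv.permCongr Fin.equivSubtype.symm
      ((σp : Equiv.Perm ℕ).subtypePerm (fun x => (fix_iff l σp.1 σp.2.2 x).symm)), by
    funext i
    have h1 : ((Equiv.permCongr Fin.equivSubtype.symm
        ((σp : Equiv.Perm ℕ).subtypePerm (fun x => (fix_iff l σp.1 σp.2.2 x).symm))) i).val
        = σp.1 i.val := rfl
    simp only [Function.comp_apply, fB, Fin.mk.injEq, h1]
    exact σp.2.1 i.val⟩
  invFun gp := ⟨(gp : Equiv.Perm (Fin (l.sum + 1))).extendDomain Fin.equivSubtype, by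
    constructor
    · intro k
      by_cases hk : k < l.sum + 1
      · have h1 : (gp.1.extendDomain Fin.equivSubtype) k = (gp.1 ⟨k, hk⟩).val := by
          rw [Equiv.Perm.extendDomain_apply_subtype gp.1 Fin.equivSubtype hk]; rfl
        rw [h1]
        have := congrFun gp.2 ⟨k, hk⟩
        simpa only [Function.comp_apply, fB, Fin.mk.injEq] using this
      · rw [Equiv.Perm.extendDomain_apply_not_subtype gp.1 Fin.equivSubtype hk]
    · intro k hk
      exact Equiv.Perm.extendDomain_apply_not_subtype gp.1 Fin.equivSubtype (by omega)⟩
  left_inv σp := by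
    ext x
    by_cases hx : x < l.sum + 1
    · show _ = σp.1 x
      rw [Equiv.Perm.extendDomain_apply_subtype _ Fin.equivSubtype hx]
      rfl
    · show _ = σp.1 x
      rw [Equiv.Perm.extendDomain_apply_not_subtype _ Fin.equivSubtype hx,
        σp.2.2 x (by omega)]
  right_inv gp := by
    ext i
    show ((gp.1.extendDomain Fin.equivSubtype) i.val : ℕ) = _
    rw [Equiv.Perm.extendDomain_apply_subtype _ Fin.equivSubtype i.isLt]
    rfl

lemma young_card (l : List ℕ) :
    (youngSet l).ncard =
      ∏ j : Fin (l.length + 2), Nat.factorial (Fintype.card {i : Fin (l.sum + 1) // fB l i = j}) := by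
  classical
  rw [← Nat.card_coe_set_eq, Nat.card_congr (youngEquiv l), Nat.card_eq_fintype_card]
  exact DomMulAct.stabilizer_card (fB l)

def G (l : List ℕ) (m : ℕ) : ℕ :=
  ((Finset.range (l.sum + 1)).filter (fun x => blockOf l x = m)).card

lemma fiber_card (l : List ℕ) (j : Fin (l.length + 2)) :
    Fintype.card {i : Fin (l.sum + 1) // fB l i = j} = G l j.val := by
  classical
  rw [Fintype.card_subtype]
  apply Finset.card_bij (fun i _ => i.val)
  · intro i hi
    simp only [Finset.mem_filter, Finset.mem_univ, true_and] at hi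
    simp only [G, Finset.mem_filter, Finset.mem_range]
    refine ⟨i.isLt, ?_⟩
    have := congrArg Fin.val hi
    exact this
  · intro i _ i' _ h
    exact Fin.val_injective h
  · intro x hx
    simp only [G, Finset.mem_filter, Finset.mem_range] at hx
    refine ⟨⟨x, hx.1⟩, ?_, rfl⟩
    simp only [Finset.mem_filter, Finset.mem_univ, true_and, fB, Fin.ext_iff]
    exact hx.2

lemma G_zero (l : List ℕ) : G l 0 = 1 := by
  have : ((Finset.range (l.sum + 1)).filter (fun x => blockOf l x = 0)) = {0} := by
    ext x
    simp only [Finset.mem_filter, Finset.mem_range, Finset.mem_singleton,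
      blockOf_zero_iff]
    omega
  rw [G, this, Finset.card_singleton]

lemma G_top (l : List ℕ) : G l (l.length + 1) = 0 := by
  have : ((Finset.range (l.sum + 1)).filter
      (fun x => blockOf l x = l.length + 1)) = ∅ := by
    ext x
    simp only [Finset.mem_filter, Finset.mem_range, Finset.notMem_empty, iff_false,
      not_and]
    intro hx hb
    have hx0 : x ≠ 0 := by
      intro h0
      rw [h0, (blockOf_zero_iff l 0).2 rfl] at hb
      omega
    rw [blockOf_eq l x hx0] at hb
    have hcnt : cnt l x = l.length := by omega
    rcases Nat.eq_zero_or_pos l.length with hL | hL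
    · have : l = [] := List.length_eq_zero_iff.1 hL
      subst this
      simp at hx
      omega
    · have := cnt_lt_of_lt l x (t := l.length - 1) (by omega)
      rw [show l.length - 1 + 1 = l.length by omega, List.take_length] at this
      omega
  rw [G, this, Finset.card_empty]

lemma G_mid (l : List ℕ) (m : ℕ) (hm : m < l.length) : G l (m + 1) = l.getD m 0 := by
  have hsub : (l.take (m + 1)).sum ≤ l.sum := by
    have := pref_mono l (show m + 1 ≤ l.length by omega)
    rwa [List.take_length] at this
  have hIoc : ((Finset.range (l.sum + 1)).filter (fun x => blockOf l x = m + 1)) =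
      Finset.Ioc ((l.take m).sum) ((l.take (m + 1)).sum) := by
    ext x
    simp only [Finset.mem_filter, Finset.mem_range, Finset.mem_Ioc]
    constructor
    · rintro ⟨hx, hb⟩
      have hx0 : x ≠ 0 := by
        intro h0
        rw [h0, (blockOf_zero_iff l 0).2 rfl] at hb
        omega
      rw [blockOf_eq l x hx0] at hb
      have hcnt : cnt l x = m := by omega
      constructor
      · rcases Nat.eq_zero_or_pos m with h0 | h0
        · subst h0
          simp only [List.take_zero, List.sum_nil]
          omega
        · have := cnt_lt_of_lt l x (t := m - 1) (by omega)
          rwa [show m - 1 + 1 = m by omega] at this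
      · have := cnt_ge l x (by omega)
        rwa [hcnt] at this
    · rintro ⟨h1, h2⟩
      have hx0 : x ≠ 0 := by omega
      refine ⟨by omega, ?_⟩
      rw [blockOf_eq l x hx0]
      have : cnt l x = m := by
        apply cnt_eq l x m (by omega)
        · intro t ht
          exact lt_of_le_of_lt (pref_mono l (show t + 1 ≤ m by omega)) h1
        · intro _
          exact h2
      omega
  rw [G, hIoc, Nat.card_Ioc]
  have hts := List.sum_take_succ l m hm
  have hg : l.getD m 0 = l[m] := List.getD_eq_getElem l 0 hm
  rw [hg]
  omega

lemma prod_map_factorial (l : List ℕ) :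
    (l.map Nat.factorial).prod =
      ∏ i ∈ Finset.range l.length, Nat.factorial (l.getD i 0) := by
  induction l with
  | nil => simp
  | cons x t ih =>
    rw [List.map_cons, List.prod_cons, List.length_cons, Finset.prod_range_succ', ih]
    simp only [List.getD_cons_succ, List.getD_cons_zero]
    ring

lemma ncard_youngSet (l : List ℕ) :
    (youngSet l).ncard = (l.map Nat.factorial).prod := by
  rw [young_card l]
  have h1 : ∀ j : Fin (l.length + 2),
      Nat.factorial (Fintype.card {i : Fin (l.sum + 1) // fB l i = j}) =
        Nat.factorial (G l j.val) := fun j => by rw [fiber_card]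
  rw [Finset.prod_congr rfl (fun j _ => h1 j)]
  rw [show (∏ j : Fin (l.length + 2), Nat.factorial (G l j.val)) =
      ∏ m ∈ Finset.range (l.length + 2), Nat.factorial (G l m) from
    Fin.prod_univ_eq_prod_range (fun m => Nat.factorial (G l m)) (l.length + 2)]
  rw [Finset.prod_range_succ, G_top, Finset.prod_range_succ', G_zero]
  have h2 : ∀ i ∈ Finset.range l.length,
      Nat.factorial (G l (i + 1)) = Nat.factorial (l.getD i 0) := by
    intro i hi
    rw [G_mid l i (Finset.mem_range.1 hi)]
  rw [Finset.prod_congr rfl h2, prod_map_factorial]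
  simp [Nat.factorial]

lemma fact_pow_dvd (pk R s : ℕ) :
    (Nat.factorial pk) ^ s * Nat.factorial R ∣ Nat.factorial (s * pk + R) := by
  induction s with
  | zero => simp
  | succ s ih =>
    have h1 : (Nat.factorial pk) ^ (s + 1) * Nat.factorial R =
        Nat.factorial pk * ((Nat.factorial pk) ^ s * Nat.factorial R) := by ring
    rw [h1]
    have h2 := mul_dvd_mul_left (Nat.factorial pk) ih
    have h3 := Nat.factorial_mul_factorial_dvd_factorial_add pk (s * pk + R)
    have h4 : pk + (s * pk + R) = (s + 1) * pk + R := by ring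
    rw [h4] at h3
    exact h2.trans h3

lemma part4 (p : ℕ) (hp : p.Prime) (s k R : ℕ) (hs : 1 ≤ s) (hsp : s < p)
    (hR : R < p ^ k) :
    ¬ p ∣ (s * p ^ k + R).factorial / ((p ^ k).factorial ^ s * R.factorial) := by
  haveI : Fact p.Prime := ⟨hp⟩
  have hp1 : 1 < p := hp.one_lt
  set pk := p ^ k with hpk
  set N := s * pk + R with hN
  set D := pk.factorial ^ s * R.factorial with hD
  have hD0 : 0 < D := mul_pos (pow_pos (Nat.factorial_pos _) _) (Nat.factorial_pos _)
  obtain ⟨q, hq⟩ := fact_pow_dvd pk R s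
  have hq' : N.factorial / D = q := by rw [hq, Nat.mul_div_cancel_left q hD0]
  rw [hq']
  have hq0 : q ≠ 0 := by
    rintro rfl
    rw [mul_zero] at hq
    exact Nat.factorial_ne_zero N hq
  have hpk0 : 0 < pk := pow_pos hp.pos k
  have hNlt : N < p ^ (k + 1) := by
    have h1 : N < (s + 1) * pk := by rw [hN]; nlinarith
    have h2 : (s + 1) * pk ≤ p * pk := Nat.mul_le_mul_right _ (by omega)
    have h3 : p * pk = p ^ (k + 1) := by rw [hpk, pow_succ]; ring
    omega
  have hlogN : Nat.log p N < k + 1 :=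
    Nat.log_lt_of_lt_pow (by positivity) hNlt
  have hlogpk : Nat.log p pk < k + 1 :=
    Nat.log_lt_of_lt_pow (by positivity) (by rw [hpk]; exact Nat.pow_lt_pow_succ hp1)
  have hlogR : Nat.log p R < k + 1 := by
    rcases Nat.eq_zero_or_pos R with h0 | h0
    · simp [h0]
    · exact Nat.log_lt_of_lt_pow (by omega) (lt_of_lt_of_le hR (Nat.pow_le_pow_right hp.pos (by omega)))
  have hterm : ∀ i ∈ Finset.Ico 1 (k + 1), N / p ^ i = s * (pk / p ^ i) + R / p ^ i := by
    intro i hi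
    rw [Finset.mem_Ico] at hi
    have hik : i ≤ k := by omega
    have hdiv : pk / p ^ i = p ^ (k - i) := Nat.pow_div hik hp.pos
    have hsplit : N = R + s * p ^ (k - i) * p ^ i := by
      rw [hN, mul_assoc, ← pow_add, Nat.sub_add_cancel hik]
      ring
    rw [hdiv, hsplit, Nat.add_mul_div_right _ _ (pow_pos hp.pos i)]
    ring
  have hsum : ∑ i ∈ Finset.Ico 1 (k + 1), N / p ^ i =
      s * (∑ i ∈ Finset.Ico 1 (k + 1), pk / p ^ i) +
        ∑ i ∈ Finset.Ico 1 (k + 1), R / p ^ i := by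
    rw [Finset.mul_sum, ← Finset.sum_add_distrib]
    exact Finset.sum_congr rfl hterm
  have hvalN : padicValNat p N.factorial = ∑ i ∈ Finset.Ico 1 (k + 1), N / p ^ i :=
    padicValNat_factorial hlogN
  have hvalpk : padicValNat p pk.factorial = ∑ i ∈ Finset.Ico 1 (k + 1), pk / p ^ i :=
    padicValNat_factorial hlogpk
  have hvalR : padicValNat p R.factorial = ∑ i ∈ Finset.Ico 1 (k + 1), R / p ^ i :=
    padicValNat_factorial hlogR
  have hvalD : padicValNat p D =
      s * padicValNat p pk.factorial + padicValNat p R.factorial := by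
    rw [hD, padicValNat.mul (pow_ne_zero _ (Nat.factorial_ne_zero _))
      (Nat.factorial_ne_zero _), padicValNat.pow _ _]
  have hvalmul : padicValNat p N.factorial = padicValNat p D + padicValNat p q := by
    rw [hq, padicValNat.mul (by omega) hq0]
  have hq_val : padicValNat p q = 0 := by
    rw [hvalN, hsum, ← hvalpk, ← hvalR, ← hvalD] at hvalmul
    omega
  intro hdvd
  have := one_le_padicValNat_of_dvd hq0 hdvd
  omega

lemma part3 (l : List ℕ) (a s pk R : ℕ) (ha : a < l.length)
    (hv : l.get ⟨a, ha⟩ = s * pk + R) :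
    (youngSet l).ncard / (youngSet (nuList l a s pk R)).ncard =
      (s * pk + R).factorial / (pk.factorial ^ s * R.factorial) := by
  rw [ncard_youngSet, ncard_youngSet]
  set A := ((l.take a).map Nat.factorial).prod with hA
  set B := ((l.drop (a + 1)).map Nat.factorial).prod with hB
  set D := pk.factorial ^ s * R.factorial with hD
  have hl : (l.map Nat.factorial).prod = A * ((s * pk + R).factorial * B) := by
    conv_lhs => rw [l_decomp l a ha]
    rw [List.map_append, List.prod_append, List.map_cons, List.prod_cons, hv]
  have hν : ((nuList l a s pk R).map Nat.factorial).prod = A * (D * B) := by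
    simp only [nuList, List.map_append, List.prod_append, List.map_replicate,
      List.prod_replicate]
    have he : ((if R = 0 then ([] : List ℕ) else [R]).map Nat.factorial).prod
        = R.factorial := by
      split
      · subst ‹R = 0›; simp
      · simp
    rw [he, hD]
    ring
  have hA0 : 0 < A := List.prod_pos (by
    intro x hx
    rw [List.mem_map] at hx
    obtain ⟨y, _, rfl⟩ := hx
    exact Nat.factorial_pos y)
  have hB0 : 0 < B := List.prod_pos (by
    intro x hx
    rw [List.mem_map] at hx
    obtain ⟨y, _, rfl⟩ := hx
    exact Nat.factorial_pos y)
  have hD0 : 0 < D := mul_pos (pow_pos (Nat.factorial_pos _) _) (Nat.factorial_pos _)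
  obtain ⟨q, hq⟩ := fact_pow_dvd pk R s
  rw [hl, hν, hq]
  have h1 : A * (D * q * B) = (A * (D * B)) * q := by ring
  rw [h1, Nat.mul_div_cancel_left q (by positivity), Nat.mul_div_cancel_left q hD0]

theorem stmt_10 (p : ℕ) (hp : p.Prime) (r : ℕ) (l : List ℕ)
    (hsort : List.Pairwise (· ≥ ·) l) (hsum : l.sum = r)
    (a s k R : ℕ) (ha : a < l.length)
    (hval : l.get ⟨a, ha⟩ = s * p ^ k + R)
    (hs : 1 ≤ s) (hsp : s < p) (hR : R < p ^ k) (hR1 : s = 1 → 0 < R) :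
    compLt (nuList l a s (p ^ k) R) l ∧
    youngSet (nuList l a s (p ^ k) R) ⊆ youngSet l ∧
    Set.ncard (youngSet l) / Set.ncard (youngSet (nuList l a s (p ^ k) R)) =
      (s * p ^ k + R).factorial / ((p ^ k).factorial ^ s * R.factorial) ∧
    ¬ p ∣ (s * p ^ k + R).factorial / ((p ^ k).factorial ^ s * R.factorial) :=
  ⟨part1 l a s (p ^ k) R ha hs hval (pow_pos hp.pos k) hR hR1,
   young_subset l a s (p ^ k) R ha hs hval,
   part3 l a s (p ^ k) R ha hval,
   part4 p hp s k R hs hsp hR⟩
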